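/- There exists a quandle covering which is not a normal extension: the 4-element involutive quandle A = {a,b,c,d} with a ◁ c = a, b ◁ c = d, d ◁ c = b, c ◁ x = c for all x, and all other products trivial (x ◁ y = x), together with the map f to the 2-element trivial quandle sending a, b, d ↦ x and c ↦ y, is a surjective quandle homomorphism which is a covering (f(u) = f(v) implies w ◁ u = w ◁ v for all w) but not normal (f(a) = f(b) and a ◁ c = a, yet b ◁ c = d ≠ b). -/

import Mathlib

/-- A quandle in the sense of the paper: a set with two binary operations
`act` (`◁`) and `inv` (`◁⁻¹`) satisfying idempotency, right invertibility
and (right) self-distributivity. -/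
class Quandle' (A : Type*) where
  act : A → A → A
  inv : A → A → A
  idem : ∀ a, act a a = a
  inv_act : ∀ a b, inv (act a b) b = a
  act_inv : ∀ a b, act (inv a b) b = a
  distrib : ∀ a b c, act (act a b) c = act (act a c) (act b c)

open Quandle'

/-- A quandle homomorphism preserves both operations. -/
def IsQuandleHom {A B : Type*} [Quandle' A] [Quandle' B] (f : A → B) : Prop :=
  (∀ a a', f (act a a') = act (f a) (f a')) ∧
  (∀ a a', f (inv a a') = inv (f a) (f a'))

/-- The right translation `ρ_b : a ↦ a ◁ b`, as a permutation of `A`. -/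
def rho {A : Type*} [Quandle' A] (b : A) : Equiv.Perm A :=
  ⟨fun a => act a b, fun a => inv a b, fun a => inv_act a b, fun a => act_inv a b⟩

/-- The group of inner automorphisms of a quandle, as a subgroup of `Equiv.Perm A`. -/
def Inn (A : Type*) [Quandle' A] : Subgroup (Equiv.Perm A) :=
  Subgroup.closure (Set.range (rho (A := A)))

/-- The orbit relation `∼_N` associated with a subgroup `N ≤ Perm A`. -/
def orbitRel {A : Type*} [Quandle' A] (N : Subgroup (Equiv.Perm A)) (a b : A) : Prop :=
  ∃ n ∈ N, n a = b

/-- Two elements are in the same connected component when they are in the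
same orbit of `Inn A`. -/
def sameComponent {A : Type*} [Quandle' A] (a b : A) : Prop :=
  orbitRel (Inn A) a b

/-- Trivial extension: a surjective quandle homomorphism such that elements with the
same image lying in the same connected component are equal (condition (T)). -/
def IsTrivialExt {A B : Type*} [Quandle' A] [Quandle' B] (f : A → B) : Prop :=
  Function.Surjective f ∧ IsQuandleHom f ∧
    ∀ a a', f a = f a' → sameComponent a a' → a = a'

/-- Evaluation of a word `a₀ ◁^{α₁} a₁ ◁^{α₂} ⋯ ◁^{αₙ} aₙ`; `true` stands for
exponent `1` and `false` for exponent `-1`. -/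
def wordEval {A : Type*} [Quandle' A] (a₀ : A) (l : List (Bool × A)) : A :=
  l.foldl (fun x p => if p.1 then act x p.2 else inv x p.2) a₀

/-- Condition (N) characterizing normal extensions. -/
def CondN {A B : Type*} [Quandle' A] [Quandle' B] (f : A → B) : Prop :=
  ∀ (a₀ : A) (l : List (Bool × A)), wordEval a₀ l = a₀ →
    ∀ (a₀' : A) (l' : List (Bool × A)), f a₀' = f a₀ →
      List.Forall₂ (fun p q => p.1 = q.1 ∧ f p.2 = f q.2) l l' →
      wordEval a₀' l' = a₀'

/-- Normal extension (via condition (N)). -/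
def IsNormalExt {A B : Type*} [Quandle' A] [Quandle' B] (f : A → B) : Prop :=
  Function.Surjective f ∧ IsQuandleHom f ∧ CondN f

/-- Quandle covering in the sense of Eisermann (= central extension). -/
def IsCovering {A B : Type*} [Quandle' A] [Quandle' B] (f : A → B) : Prop :=
  Function.Surjective f ∧ IsQuandleHom f ∧
    ∀ a a' c, f a = f a' → act c a = act c a'

/-- A congruence on a quandle: an equivalence relation compatible with both operations. -/
def IsCongruence {A : Type*} [Quandle' A] (r : A → A → Prop) : Prop :=
  Equivalence r ∧
    ∀ a a' b b', r a b → r a' b' → r (act a a') (act b b') ∧ r (inv a a') (inv b b')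

/-- Relational composition: `(a,b) ∈ relComp S R` iff `∃ c, R a c ∧ S c b`. -/
def relComp {X : Type*} (S R : X → X → Prop) (a b : X) : Prop :=
  ∃ c, R a c ∧ S c b

/-- The kernel congruence of a map. -/
def eqRel {A B : Type*} (f : A → B) (a a' : A) : Prop := f a = f a'

/-- The image of a relation along a map. -/
def imageRel {A B : Type*} (f : A → B) (R : A → A → Prop) (b b' : B) : Prop :=
  ∃ a a', R a a' ∧ f a = b ∧ f a' = b'

instance prodQuandle {A B : Type*} [Quandle' A] [Quandle' B] : Quandle' (A × B) where
  act p q := (act p.1 q.1, act p.2 q.2)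
  inv p q := (inv p.1 q.1, inv p.2 q.2)
  idem p := Prod.ext (idem p.1) (idem p.2)
  inv_act p q := Prod.ext (inv_act p.1 q.1) (inv_act p.2 q.2)
  act_inv p q := Prod.ext (act_inv p.1 q.1) (act_inv p.2 q.2)
  distrib p q r := Prod.ext (distrib p.1 q.1 r.1) (distrib p.2 q.2 r.2)

/-- The pullback of `f : A → C` and `g : B → C` as a set. -/
def Pullback {A B C : Type*} (f : A → C) (g : B → C) : Type _ :=
  { p : A × B // f p.1 = g p.2 }

/-- The quandle structure on a pullback of two quandle homomorphisms. -/
def pullbackQuandle {A B C : Type*} [Quandle' A] [Quandle' B] [Quandle' C]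
    (f : A → C) (g : B → C) (hf : IsQuandleHom f) (hg : IsQuandleHom g) :
    Quandle' (Pullback f g) where
  act p q := ⟨act p.1 q.1, by
    show f (act p.1.1 q.1.1) = g (act p.1.2 q.1.2)
    rw [hf.1, hg.1, p.2, q.2]⟩
  inv p q := ⟨inv p.1 q.1, by
    show f (inv p.1.1 q.1.1) = g (inv p.1.2 q.1.2)
    rw [hf.2, hg.2, p.2, q.2]⟩
  idem p := Subtype.ext (idem p.1)
  inv_act p q := Subtype.ext (inv_act p.1 q.1)
  act_inv p q := Subtype.ext (act_inv p.1 q.1)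
  distrib p q r := Subtype.ext (distrib p.1 q.1 r.1)

/-- The congruence generated by a relation `R`. -/
def congClosure {A : Type*} [Quandle' A] (R : A → A → Prop) (a b : A) : Prop :=
  ∀ S : A → A → Prop, IsCongruence S → (∀ x y, R x y → S x y) → S a b

/-- The congruence generated by `R`, as a setoid. -/
def congClosureSetoid {A : Type*} [Quandle' A] (R : A → A → Prop) : Setoid A :=
  ⟨congClosure R,
    ⟨fun a S hS _ => hS.1.refl a,
     fun h S hS hR => hS.1.symm (h S hS hR),
     fun h1 h2 S hS hR => hS.1.trans (h1 S hS hR) (h2 S hS hR)⟩⟩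

/-- The quotient quandle by the congruence generated by `R`. -/
def quotQuandle {A : Type*} [Quandle' A] (R : A → A → Prop) :
    Quandle' (Quotient (congClosureSetoid R)) where
  act := Quotient.map₂ act
    (fun _ _ h _ _ h' S hS hR => (hS.2 _ _ _ _ (h S hS hR) (h' S hS hR)).1)
  inv := Quotient.map₂ inv
    (fun _ _ h _ _ h' S hS hR => (hS.2 _ _ _ _ (h S hS hR) (h' S hS hR)).2)
  idem q := Quotient.inductionOn q fun a => congrArg (Quotient.mk _) (idem a)
  inv_act q r := Quotient.inductionOn₂ q r fun a b => congrArg (Quotient.mk _) (inv_act a b)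
  act_inv q r := Quotient.inductionOn₂ q r fun a b => congrArg (Quotient.mk _) (act_inv a b)
  distrib q r s := Quotient.inductionOn₃ q r s fun a b c => congrArg (Quotient.mk _) (distrib a b c)

/-- The four-element quandle of the example. -/
inductive Q4 | a | b | c | d
  deriving DecidableEq

instance : Fintype Q4 :=
  Fintype.ofList [Q4.a, Q4.b, Q4.c, Q4.d] (fun x => by cases x <;> simp)

/-- The operation: `b ◁ c = d`, `d ◁ c = b`, and `x ◁ y = x` otherwise. -/
def q4act : Q4 → Q4 → Q4
  | Q4.b, Q4.c => Q4.d
  | Q4.d, Q4.c => Q4.b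
  | x, _ => x

instance : Quandle' Q4 where
  act := q4act
  inv := q4act
  idem := by decide
  inv_act := by decide
  act_inv := by decide
  distrib := by decide

/-- The two-element trivial quandle, on `Bool`. -/
instance : Quandle' Bool where
  act x _ := x
  inv x _ := x
  idem _ := rfl
  inv_act _ _ := rfl
  act_inv _ _ := rfl
  distrib _ _ _ := rfl

/-- The map sending `a, b, d` to one element and `c` to the other. -/
def fQ4 : Q4 → Bool := fun x => x = Q4.c

theorem stmt13 : IsCovering fQ4 ∧ ¬ IsNormalExt fQ4 := by
  constructor
  · refine ⟨fun b => ?_, ⟨by decide, by decide⟩, by decide⟩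
    cases b
    · exact ⟨Q4.a, rfl⟩
    · exact ⟨Q4.c, rfl⟩
  · rintro ⟨-, -, hN⟩
    have := hN Q4.a [(true, Q4.c)] rfl Q4.b [(true, Q4.c)] rfl
      (List.Forall₂.cons ⟨rfl, rfl⟩ List.Forall₂.nil)
    exact absurd this (by decide)
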